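/- Let n ≥ 1 and let u₁, u₂, u₃ be nonzero vectors in ℝⁿ and c₁, c₂, c₃ real numbers. Then the three open halfspaces H_i = {y ∈ ℝⁿ : ⟪u_i, y⟫ > c_i} (i = 1, 2, 3) cannot be pairwise disjoint; that is, at least one of the intersections H₁ ∩ H₂, H₁ ∩ H₃, H₂ ∩ H₃ is nonempty. -/

import Mathlib

open RealInnerProductSpace

lemma halfspace_disj_neg_mul {n : ℕ} (u v : EuclideanSpace ℝ (Fin n))
    (hu : u ≠ 0) (hv : v ≠ 0) (c d : ℝ)
    (h : ∀ y : EuclideanSpace ℝ (Fin n), ⟪u, y⟫ > c → ¬ (⟪v, y⟫ > d)) :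
    ∃ t : ℝ, t < 0 ∧ v = t • u := by
  have hun : (0:ℝ) < ‖u‖^2 := by
    have := norm_pos_iff.mpr hu
    positivity
  set a : ℝ := ⟪u, v⟫ / ‖u‖^2 with ha
  set w : EuclideanSpace ℝ (Fin n) := v - a • u with hwdef
  have huw : ⟪u, w⟫ = 0 := by
    simp only [hwdef, inner_sub_right, real_inner_smul_right, ha,
      real_inner_self_eq_norm_sq]
    field_simp
    ring
  have hvw : ⟪v, w⟫ = ‖w‖^2 := by
    have : v = w + a • u := by simp [hwdef]
    rw [this, inner_add_left, real_inner_smul_left, huw, real_inner_self_eq_norm_sq]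
    ring
  have hweq : w = 0 := by
    by_contra hw0
    have hwn : (0:ℝ) < ‖w‖^2 := by
      have := norm_pos_iff.mpr hw0
      positivity
    set s : ℝ := (|c| + 1) / ‖u‖^2 with hs
    have hsc : s * ‖u‖^2 > c := by
      rw [hs, div_mul_cancel₀ _ (ne_of_gt hun)]
      calc c ≤ |c| := le_abs_self c
        _ < |c| + 1 := by linarith
    set r : ℝ := (d + 1 - s * ⟪v, u⟫) / ‖w‖^2 with hr
    set y : EuclideanSpace ℝ (Fin n) := s • u + r • w with hy
    have hy1 : ⟪u, y⟫ > c := by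
      rw [hy, inner_add_right, real_inner_smul_right, real_inner_smul_right, huw,
        real_inner_self_eq_norm_sq]
      simpa using hsc
    have hy2 : ⟪v, y⟫ > d := by
      rw [hy, inner_add_right, real_inner_smul_right, real_inner_smul_right, hvw,
        hr, div_mul_cancel₀ _ (ne_of_gt hwn)]
      linarith
    exact h y hy1 hy2
  have hva : v = a • u := by
    have h' := hweq
    rw [hwdef, sub_eq_zero] at h'
    exact h'
  have ha0 : a ≠ 0 := by
    intro h0
    apply hv
    rw [hva, h0, zero_smul]
  refine ⟨a, ?_, hva⟩
  by_contra hpos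
  push_neg at hpos
  have hapos : 0 < a := lt_of_le_of_ne hpos (Ne.symm ha0)
  set s : ℝ := max ((|c| + 1) / ‖u‖^2) ((|d| + 1) / (a * ‖u‖^2)) with hs
  have hsc : s * ‖u‖^2 > c := by
    have h1 : (|c| + 1) / ‖u‖^2 ≤ s := le_max_left _ _
    have : (|c| + 1) / ‖u‖^2 * ‖u‖^2 ≤ s * ‖u‖^2 :=
      mul_le_mul_of_nonneg_right h1 (le_of_lt hun)
    rw [div_mul_cancel₀ _ (ne_of_gt hun)] at this
    have := le_abs_self c
    linarith
  have hsd : a * (s * ‖u‖^2) > d := by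
    have h1 : (|d| + 1) / (a * ‖u‖^2) ≤ s := le_max_right _ _
    have hau : (0:ℝ) < a * ‖u‖^2 := by positivity
    have : (|d| + 1) / (a * ‖u‖^2) * (a * ‖u‖^2) ≤ s * (a * ‖u‖^2) :=
      mul_le_mul_of_nonneg_right h1 (le_of_lt hau)
    rw [div_mul_cancel₀ _ (ne_of_gt hau)] at this
    have := le_abs_self d
    nlinarith
  apply h (s • u) _ _
  · rw [real_inner_smul_right, real_inner_self_eq_norm_sq]
    exact hsc
  · rw [hva, real_inner_smul_left, real_inner_smul_right, real_inner_self_eq_norm_sq]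
    nlinarith

/-- Three open halfspaces in `ℝⁿ` cannot be pairwise disjoint: at least one of the
pairwise intersections is nonempty. -/
theorem three_halfspaces_not_pairwise_disjoint
    (n : ℕ) (hn : 1 ≤ n) (u₁ u₂ u₃ : EuclideanSpace ℝ (Fin n))
    (h₁ : u₁ ≠ 0) (h₂ : u₂ ≠ 0) (h₃ : u₃ ≠ 0) (c₁ c₂ c₃ : ℝ) :
    ({y : EuclideanSpace ℝ (Fin n) | ⟪u₁, y⟫ > c₁} ∩
      {y : EuclideanSpace ℝ (Fin n) | ⟪u₂, y⟫ > c₂}).Nonempty ∨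
    ({y : EuclideanSpace ℝ (Fin n) | ⟪u₁, y⟫ > c₁} ∩
      {y : EuclideanSpace ℝ (Fin n) | ⟪u₃, y⟫ > c₃}).Nonempty ∨
    ({y : EuclideanSpace ℝ (Fin n) | ⟪u₂, y⟫ > c₂} ∩
      {y : EuclideanSpace ℝ (Fin n) | ⟪u₃, y⟫ > c₃}).Nonempty := by
  by_contra hcon
  push_neg at hcon
  obtain ⟨hA, hB, hC⟩ := hcon
  rw [Set.eq_empty_iff_forall_notMem] at hA hB hC
  have d12 : ∀ y : EuclideanSpace ℝ (Fin n), ⟪u₁, y⟫ > c₁ → ¬ (⟪u₂, y⟫ > c₂) := by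
    intro y hy hy2; exact hA y ⟨hy, hy2⟩
  have d13 : ∀ y : EuclideanSpace ℝ (Fin n), ⟪u₁, y⟫ > c₁ → ¬ (⟪u₃, y⟫ > c₃) := by
    intro y hy hy2; exact hB y ⟨hy, hy2⟩
  have d23 : ∀ y : EuclideanSpace ℝ (Fin n), ⟪u₂, y⟫ > c₂ → ¬ (⟪u₃, y⟫ > c₃) := by
    intro y hy hy2; exact hC y ⟨hy, hy2⟩
  obtain ⟨t12, ht12, he12⟩ := halfspace_disj_neg_mul u₁ u₂ h₁ h₂ c₁ c₂ d12
  obtain ⟨t13, ht13, he13⟩ := halfspace_disj_neg_mul u₁ u₃ h₁ h₃ c₁ c₃ d13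
  obtain ⟨t23, ht23, he23⟩ := halfspace_disj_neg_mul u₂ u₃ h₂ h₃ c₂ c₃ d23
  have : u₃ = (t23 * t12) • u₁ := by rw [he23, he12, smul_smul]
  rw [he13] at this
  have heq : (t13 - t23 * t12) • u₁ = 0 := by
    rw [sub_smul, this, sub_self]
  have := smul_eq_zero.mp heq
  rcases this with h | h
  · nlinarith
  · exact h₁ h
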